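/- For a sober topological space X, the frame of open subsets of X is locally temperate if and only if X is weakly Hausdorff and coherent. -/

import Mathlib

/-- The specialization preorder: `x ≤ y` iff every open neighborhood of `x` contains `y`. -/
def SpecLE {X : Type*} [TopologicalSpace X] (x y : X) : Prop :=
  ∀ U : Set X, IsOpen U → x ∈ U → y ∈ U

/-- `↑x`, the upward closure of the point `x` in the specialization preorder. -/
def UpSet {X : Type*} [TopologicalSpace X] (x : X) : Set X :=
  {z | SpecLE x z}

/-- `↑A`, the upward closure of the set `A` in the specialization preorder. -/
def UpClo {X : Type*} [TopologicalSpace X] (A : Set X) : Set X :=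
  {z | ∃ a ∈ A, SpecLE a z}

/-- `↓A`, the downward closure of the set `A` in the specialization preorder. -/
def DownClo {X : Type*} [TopologicalSpace X] (A : Set X) : Set X :=
  {z | ∃ a ∈ A, SpecLE z a}

/-- A space is weakly Hausdorff (Keimel-Lawson) iff every open neighborhood `W` of
`↑x ∩ ↑y` contains `U ∩ V` for some open neighborhoods `U` of `x` and `V` of `y`. -/
def WeaklyHausdorff (X : Type*) [TopologicalSpace X] : Prop :=
  ∀ x y : X, ∀ W : Set X, IsOpen W → UpSet x ∩ UpSet y ⊆ W →
    ∃ U V : Set X, IsOpen U ∧ x ∈ U ∧ IsOpen V ∧ y ∈ V ∧ U ∩ V ⊆ W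

/-- The set of limits of a filter: points all of whose open neighborhoods belong to it. -/
def limSet {X : Type*} [TopologicalSpace X] (F : Filter X) : Set X :=
  {x | ∀ U : Set X, IsOpen U → x ∈ U → U ∈ F}

/-- Locally strongly sober: limits of each ultrafilter form the empty set or the closure
of a unique point. -/
def LocallyStronglySober (X : Type*) [TopologicalSpace X] : Prop :=
  ∀ 𝒰 : Ultrafilter X, limSet (𝒰 : Filter X) = ∅ ∨ ∃! x : X, limSet (𝒰 : Filter X) = closure {x}

/-- Saturated subset: intersection of its open neighborhoods. -/
def IsSaturated {X : Type*} [TopologicalSpace X] (A : Set X) : Prop :=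
  A = ⋂₀ {U : Set X | IsOpen U ∧ A ⊆ U}

/-- Coherent space: intersections of compact saturated subsets are compact. -/
def Coherent (X : Type*) [TopologicalSpace X] : Prop :=
  ∀ Q₁ Q₂ : Set X, IsCompact Q₁ → IsSaturated Q₁ → IsCompact Q₂ → IsSaturated Q₂ →
    IsCompact (Q₁ ∩ Q₂)

/-- Weakly coherent space: `↑x ∩ ↑y` is compact for all points `x`, `y`. -/
def WeaklyCoherent (X : Type*) [TopologicalSpace X] : Prop :=
  ∀ x y : X, IsCompact (UpSet x ∩ UpSet y)

/-- Sober space: every irreducible closed subset is the closure of a unique point. -/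
def Sober (X : Type*) [TopologicalSpace X] : Prop :=
  ∀ C : Set X, IsClosed C → IsIrreducible C → ∃! x : X, C = closure {x}

/-- `z` is a supremum of `D` with respect to the specialization preorder. -/
def IsSupOf {X : Type*} [TopologicalSpace X] (D : Set X) (z : X) : Prop :=
  (∀ d ∈ D, SpecLE d z) ∧ ∀ y : X, (∀ d ∈ D, SpecLE d y) → SpecLE z y

/-- `D` is (nonempty and) directed with respect to the specialization preorder. -/
def DirectedSubset {X : Type*} [TopologicalSpace X] (D : Set X) : Prop :=
  D.Nonempty ∧ DirectedOn SpecLE D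

/-- Monotone convergence space: a T0 space where every directed subset has a supremum for the
specialization ordering, and every open set is Scott-open. -/
def MonotoneConvergenceSpace (X : Type*) [TopologicalSpace X] : Prop :=
  T0Space X ∧ (∀ D : Set X, DirectedSubset D → ∃ z : X, IsSupOf D z) ∧
    ∀ U : Set X, IsOpen U → ∀ D : Set X, ∀ z : X,
      DirectedSubset D → IsSupOf D z → z ∈ U → ∃ d ∈ D, d ∈ U

/-- A filter on a complete lattice: nonempty, upward closed, downward directed. -/
def IsLatFilter {L : Type*} [CompleteLattice L] (F : Set L) : Prop :=
  F.Nonempty ∧ (∀ u ∈ F, ∀ v : L, u ≤ v → v ∈ F) ∧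
    ∀ u ∈ F, ∀ v ∈ F, ∃ w ∈ F, w ≤ u ∧ w ≤ v

/-- A Scott-open filter on a complete lattice. -/
def ScottOpenFilter {L : Type*} [CompleteLattice L] (F : Set L) : Prop :=
  IsLatFilter F ∧
    ∀ D : Set L, D.Nonempty → DirectedOn (· ≤ ·) D → sSup D ∈ F → ∃ d ∈ D, d ∈ F

/-- The join of two filters on a complete lattice: `{u ⊓ v | u ∈ F, v ∈ G}`. -/
def FilterJoin {L : Type*} [CompleteLattice L] (F G : Set L) : Set L :=
  {w | ∃ u ∈ F, ∃ v ∈ G, w = u ⊓ v}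

/-- Locally temperate: the join of any two Scott-open filters is a Scott-open filter. -/
def LocallyTemperate (L : Type*) [CompleteLattice L] : Prop :=
  ∀ F G : Set L, ScottOpenFilter F → ScottOpenFilter G → ScottOpenFilter (FilterJoin F G)

/-- `u` is way below `v`: every directed set with supremum above `v` contains an element above `u`. -/
def WayBelowL {L : Type*} [CompleteLattice L] (u v : L) : Prop :=
  ∀ D : Set L, D.Nonempty → DirectedOn (· ≤ ·) D → v ≤ sSup D → ∃ d ∈ D, u ≤ d

/-- Continuous lattice: every element is the supremum of a directed family of elements
way below it. -/
def ContinuousLat (L : Type*) [CompleteLattice L] : Prop :=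
  ∀ v : L, ∃ D : Set L, D.Nonempty ∧ DirectedOn (· ≤ ·) D ∧ (∀ d ∈ D, WayBelowL d v) ∧ v = sSup D

/-- Stable frame: `u ≪ v` and `u ≪ w` imply `u ≪ v ⊓ w`. -/
def StableLat (L : Type*) [CompleteLattice L] : Prop :=
  ∀ u v w : L, WayBelowL u v → WayBelowL u w → WayBelowL u (v ⊓ w)

/-- Core-compact space: the frame of open subsets is a continuous lattice. -/
def CoreCompact (X : Type*) [TopologicalSpace X] : Prop :=
  ContinuousLat (TopologicalSpace.Opens X)

/-- A lens: a nonempty set of the form `Q ∩ C` with `Q` compact saturated and `C` closed. -/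
def IsLens {X : Type*} [TopologicalSpace X] (L : Set X) : Prop :=
  L.Nonempty ∧ ∃ Q C : Set X, IsCompact Q ∧ IsSaturated Q ∧ IsClosed C ∧ L = Q ∩ C

/-- A quasi-lens: a pair `(Q, C)`, `Q` compact saturated, `C` closed, `Q` meets `C`,
`Q ⊆ ↑(Q ∩ C)`, and `C ⊆ cl (U ∩ C)` for every open neighborhood `U` of `Q`. -/
def IsQuasiLens {X : Type*} [TopologicalSpace X] (Q C : Set X) : Prop :=
  IsCompact Q ∧ IsSaturated Q ∧ IsClosed C ∧ (Q ∩ C).Nonempty ∧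
    Q ⊆ UpClo (Q ∩ C) ∧ ∀ U : Set X, IsOpen U → Q ⊆ U → C ⊆ closure (U ∩ C)

section Helpers

open TopologicalSpace Set

variable {X : Type*} [TopologicalSpace X]

/-- Upward-closed set in the specialization preorder. -/
def UpClosed (A : Set X) : Prop := ∀ a ∈ A, ∀ b, SpecLE a b → b ∈ A

lemma specLE_iff_mem_closure {a z : X} : SpecLE a z ↔ a ∈ closure ({z} : Set X) := by
  rw [mem_closure_iff]
  constructor
  · intro h O hO haO
    exact ⟨z, h O hO haO, rfl⟩
  · intro h U hU haU
    obtain ⟨w, hwU, hwz⟩ := h U hU haU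
    rw [Set.mem_singleton_iff] at hwz
    exact hwz ▸ hwU

lemma upClosed_of_isOpen {U : Set X} (hU : IsOpen U) : UpClosed U :=
  fun a ha b hab => hab U hU ha

lemma upClosed_of_saturated {A : Set X} (h : IsSaturated A) : UpClosed A := by
  intro a ha b hab
  rw [h] at ha ⊢
  rw [Set.mem_sInter] at ha ⊢
  rintro t ⟨hto, hAt⟩
  exact hab t hto (ha t ⟨hto, hAt⟩)

lemma saturated_of_upClosed {A : Set X} (h : UpClosed A) : IsSaturated A := by
  apply Subset.antisymm
  · intro a ha
    rw [Set.mem_sInter]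
    rintro t ⟨_, hAt⟩
    exact hAt ha
  · intro z hz
    by_contra hzA
    have hUo : IsOpen (closure ({z} : Set X))ᶜ := isClosed_closure.isOpen_compl
    have hAU : A ⊆ (closure ({z} : Set X))ᶜ := by
      intro a ha hacl
      exact hzA (h a ha z (specLE_iff_mem_closure.mpr hacl))
    have := (Set.mem_sInter.mp hz) _ ⟨hUo, hAU⟩
    exact this (subset_closure rfl)

lemma exists_le_of_compact_subset_sSup {K : Set X} (hK : IsCompact K) {D : Set (Opens X)}
    (hne : D.Nonempty) (hdir : DirectedOn (· ≤ ·) D) (hsub : K ⊆ ↑(sSup D)) :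
    ∃ d ∈ D, K ⊆ ↑d := by
  haveI : Nonempty D := hne.coe_sort
  have hdirf : Directed (· ≤ ·) (fun d : D => d.1) := directedOn_iff_directed.mp hdir
  have hcov : K ⊆ ⋃ d : D, (d.1 : Set X) := by
    intro x hx
    obtain ⟨u, hu, hxu⟩ := Opens.mem_sSup.mp (hsub hx)
    exact Set.mem_iUnion.2 ⟨⟨u, hu⟩, hxu⟩
  obtain ⟨t, ht⟩ := hK.elim_finite_subcover (fun d : D => (d.1 : Set X)) (fun d => d.1.2) hcov
  obtain ⟨z, hz⟩ := hdirf.finset_le t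
  refine ⟨z.1, z.2, fun x hx => ?_⟩
  obtain ⟨d, hd, hxd⟩ := Set.mem_iUnion₂.mp (ht hx)
  exact hz d hd hxd

lemma scottOpenFilter_nbhds {K : Set X} (hK : IsCompact K) :
    ScottOpenFilter {U : Opens X | K ⊆ ↑U} := by
  refine ⟨⟨⟨⊤, by simp⟩, fun u hu v huv => Set.Subset.trans hu huv, fun u hu v hv =>
    ⟨u ⊓ v, ?_, inf_le_left, inf_le_right⟩⟩, ?_⟩
  · show K ⊆ ↑(u ⊓ v)
    rw [Opens.coe_inf]
    exact Set.subset_inter hu hv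
  · intro D hne hdir hmem
    exact exists_le_of_compact_subset_sSup hK hne hdir hmem

/-- The Hofmann–Mislove theorem: in a sober space, a Scott-open filter of opens consists
exactly of the open neighborhoods of its (compact) intersection. -/
lemma hofmann_mislove (hsob : Sober X) {F : Set (Opens X)} (hF : ScottOpenFilter F) :
    (∀ U : Opens X, (⋂ V ∈ F, (V : Set X)) ⊆ ↑U → U ∈ F) ∧
      IsCompact (⋂ V ∈ F, (V : Set X)) := by
  have htop : (⊤ : Opens X) ∈ F := by
    obtain ⟨u, hu⟩ := hF.1.1
    exact hF.1.2.1 u hu ⊤ le_top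
  have key : ∀ U : Opens X, (⋂ V ∈ F, (V : Set X)) ⊆ ↑U → U ∈ F := by
    intro U hU
    by_contra hUF
    set S : Set (Opens X) := {V | U ≤ V ∧ V ∉ F} with hS
    have hUS : U ∈ S := ⟨le_rfl, hUF⟩
    obtain ⟨m, hUm, hmS, hmax⟩ := zorn_le_nonempty₀ S (fun c hcS hchain y hy => by
      refine ⟨sSup c, ⟨(hcS hy).1.trans (le_sSup hy), fun hmem => ?_⟩, fun z hz => le_sSup hz⟩
      obtain ⟨d, hd, hdF⟩ := hF.2 c ⟨y, hy⟩ hchain.directedOn hmem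
      exact (hcS hd).2 hdF) U hUS
    have hmF : m ∉ F := hmS.2
    have keysup : ∀ A : Opens X, ¬(A ≤ m) → m ⊔ A ∈ F := by
      intro A hA
      by_contra hAF
      have hmem : m ⊔ A ∈ S := ⟨hUm.trans le_sup_left, hAF⟩
      have := hmax hmem le_sup_left
      exact hA (le_sup_right.trans this)
    set C : Set X := (↑m)ᶜ with hC
    have hCc : IsClosed C := m.2.isClosed_compl
    have hCne : C.Nonempty := by
      rw [Set.nonempty_compl]
      intro hmu
      apply hmF
      have : m = ⊤ := by
        apply SetLike.coe_injective
        rw [hmu, Opens.coe_top]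
      rw [this]; exact htop
    have hirr : IsIrreducible C := by
      refine ⟨hCne, fun u v hu hv ⟨a, haC, hau⟩ ⟨b, hbC, hbv⟩ => ?_⟩
      have hA : ¬((⟨u, hu⟩ : Opens X) ≤ m) := fun h => haC (h hau)
      have hB : ¬((⟨v, hv⟩ : Opens X) ≤ m) := fun h => hbC (h hbv)
      obtain ⟨w, hwF, hw1, hw2⟩ := hF.1.2.2 _ (keysup _ hA) _ (keysup _ hB)
      have hmem : m ⊔ (⟨u, hu⟩ ⊓ ⟨v, hv⟩ : Opens X) ∈ F := by
        apply hF.1.2.1 w hwF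
        rw [sup_inf_left]
        exact le_inf hw1 hw2
      rw [Set.nonempty_iff_ne_empty]
      intro hemp
      apply hmF
      have hle : (⟨u, hu⟩ ⊓ ⟨v, hv⟩ : Opens X) ≤ m := by
        intro x hx
        by_contra hxm
        have : x ∈ C ∩ (u ∩ v) := ⟨hxm, hx⟩
        rw [hemp] at this
        exact this
      rwa [sup_eq_left.mpr hle] at hmem
    obtain ⟨x, hx, -⟩ := hsob C hCc hirr
    have hxK : x ∈ ⋂ V ∈ F, (V : Set X) := by
      rw [Set.mem_iInter₂]
      intro W hW
      by_contra hxW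
      apply hmF
      apply hF.1.2.1 W hW
      intro z hzW
      by_contra hzm
      have hzC : z ∈ C := hzm
      rw [hx] at hzC
      exact hxW (specLE_iff_mem_closure.mpr hzC (W : Set X) W.2 hzW)
    have : x ∈ C := by rw [hx]; exact subset_closure rfl
    exact this (hUm (hU hxK))
  refine ⟨key, ?_⟩
  apply isCompact_of_finite_subcover
  intro ι Us hUs hcov
  classical
  have hBig : (⨆ i, (⟨Us i, hUs i⟩ : Opens X)) ∈ F := by
    apply key
    rwa [Opens.coe_iSup]
  set D : Set (Opens X) := {V | ∃ t : Finset ι, V = ⨆ i ∈ t, (⟨Us i, hUs i⟩ : Opens X)} with hD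
  have hne : D.Nonempty := ⟨⊥, ∅, by simp⟩
  have hdir : DirectedOn (· ≤ ·) D := by
    rintro _ ⟨t1, rfl⟩ _ ⟨t2, rfl⟩
    refine ⟨_, ⟨t1 ∪ t2, rfl⟩, ?_, ?_⟩
    · exact biSup_mono (fun i hi => Finset.mem_union_left _ hi)
    · exact biSup_mono (fun i hi => Finset.mem_union_right _ hi)
  have hsupD : sSup D ∈ F := by
    apply hF.1.2.1 _ hBig
    apply iSup_le
    intro i
    have hmem : (⨆ j ∈ ({i} : Finset ι), (⟨Us j, hUs j⟩ : Opens X)) ∈ D := ⟨{i}, rfl⟩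
    calc (⟨Us i, hUs i⟩ : Opens X) ≤ ⨆ j ∈ ({i} : Finset ι), (⟨Us j, hUs j⟩ : Opens X) := by simp
      _ ≤ sSup D := le_sSup hmem
  obtain ⟨d, ⟨t, rfl⟩, hdF⟩ := hF.2 D hne hdir hsupD
  refine ⟨t, ?_⟩
  have hsub : (⋂ V ∈ F, (V : Set X)) ⊆ ↑(⨆ i ∈ t, (⟨Us i, hUs i⟩ : Opens X)) := by
    intro x hx
    exact Set.mem_iInter₂.mp hx _ hdF
  intro x hx
  have := hsub hx
  simp only [Opens.coe_iSup] at this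
  simpa using this

lemma wh_sep_pt (hwh : WeaklyHausdorff X) {Q : Set X} (hQ : IsCompact Q)
    (hup : UpClosed Q) {y : X} {W : Set X} (hW : IsOpen W)
    (hsub : Q ∩ UpSet y ⊆ W) :
    ∃ U V : Set X, IsOpen U ∧ Q ⊆ U ∧ IsOpen V ∧ y ∈ V ∧ U ∩ V ⊆ W := by
  have hx : ∀ x : Q, ∃ U V : Set X, IsOpen U ∧ (x : X) ∈ U ∧ IsOpen V ∧ y ∈ V ∧ U ∩ V ⊆ W := by
    rintro ⟨x, hxQ⟩
    apply hwh x y W hW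
    rintro z ⟨hz1, hz2⟩
    exact hsub ⟨hup x hxQ z hz1, hz2⟩
  choose U V hUo hxU hVo hyV hUV using hx
  obtain ⟨t, ht⟩ := hQ.elim_finite_subcover U (fun x => hUo x)
    (fun x hx => Set.mem_iUnion.2 ⟨⟨x, hx⟩, hxU _⟩)
  refine ⟨⋃ x ∈ t, U x, ⋂ x ∈ t, V x, isOpen_biUnion (fun _ _ => hUo _), ht,
    isOpen_biInter_finset (fun _ _ => hVo _), Set.mem_iInter₂.2 (fun _ _ => hyV _), ?_⟩
  rintro z ⟨hzU, hzV⟩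
  obtain ⟨x, hxt, hzx⟩ := Set.mem_iUnion₂.mp hzU
  exact hUV x ⟨hzx, Set.mem_iInter₂.mp hzV x hxt⟩

lemma wh_sep (hwh : WeaklyHausdorff X) {Q₁ Q₂ : Set X} (h1 : IsCompact Q₁) (hu1 : UpClosed Q₁)
    (h2 : IsCompact Q₂) (hu2 : UpClosed Q₂) {W : Set X} (hW : IsOpen W)
    (hsub : Q₁ ∩ Q₂ ⊆ W) :
    ∃ U V : Set X, IsOpen U ∧ Q₁ ⊆ U ∧ IsOpen V ∧ Q₂ ⊆ V ∧ U ∩ V ⊆ W := by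
  have hy : ∀ y : Q₂, ∃ U V : Set X, IsOpen U ∧ Q₁ ⊆ U ∧ IsOpen V ∧ (y : X) ∈ V ∧ U ∩ V ⊆ W := by
    rintro ⟨y, hyQ⟩
    apply wh_sep_pt hwh h1 hu1 hW
    rintro z ⟨hz1, hz2⟩
    exact hsub ⟨hz1, hu2 y hyQ z hz2⟩
  choose U V hUo hQU hVo hyV hUV using hy
  obtain ⟨t, ht⟩ := h2.elim_finite_subcover V (fun y => hVo y)
    (fun y hy => Set.mem_iUnion.2 ⟨⟨y, hy⟩, hyV _⟩)
  refine ⟨⋂ y ∈ t, U y, ⋃ y ∈ t, V y, isOpen_biInter_finset (fun _ _ => hUo _),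
    Set.subset_iInter₂ (fun _ _ => hQU _), isOpen_biUnion (fun _ _ => hVo _), ht, ?_⟩
  rintro z ⟨hzU, hzV⟩
  obtain ⟨y, hyt, hzy⟩ := Set.mem_iUnion₂.mp hzV
  exact hUV y ⟨Set.mem_iInter₂.mp hzU y hyt, hzy⟩

end Helpers

open TopologicalSpace Set in
theorem opens_locallyTemperate_iff_weaklyHausdorff_coherent (X : Type*) [TopologicalSpace X]
    (hsob : Sober X) :
    LocallyTemperate (TopologicalSpace.Opens X) ↔ (WeaklyHausdorff X ∧ Coherent X) := by
  constructor
  · intro hLT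
    constructor
    · -- Weakly Hausdorff
      intro x y W hW hsub
      have hFx : ScottOpenFilter {U : Opens X | x ∈ U} := by
        refine ⟨⟨⟨⊤, trivial⟩, fun u hu v huv => huv hu, fun u hu v hv =>
          ⟨u ⊓ v, ⟨hu, hv⟩, inf_le_left, inf_le_right⟩⟩, fun D _ _ hmem => ?_⟩
        exact Opens.mem_sSup.mp hmem
      have hFy : ScottOpenFilter {U : Opens X | y ∈ U} := by
        refine ⟨⟨⟨⊤, trivial⟩, fun u hu v huv => huv hu, fun u hu v hv =>
          ⟨u ⊓ v, ⟨hu, hv⟩, inf_le_left, inf_le_right⟩⟩, fun D _ _ hmem => ?_⟩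
        exact Opens.mem_sSup.mp hmem
      have hH := hLT _ _ hFx hFy
      obtain ⟨hmem, -⟩ := hofmann_mislove hsob hH
      have hKsub : (⋂ V ∈ FilterJoin {U : Opens X | x ∈ U} {U : Opens X | y ∈ U},
          (V : Set X)) ⊆ W := by
        intro z hz
        apply hsub
        constructor
        · intro O hO hxO
          have hm : ((⟨O, hO⟩ : Opens X) ⊓ ⊤) ∈
              FilterJoin {U : Opens X | x ∈ U} {U : Opens X | y ∈ U} :=
            ⟨⟨O, hO⟩, hxO, ⊤, trivial, rfl⟩
          have := Set.mem_iInter₂.mp hz _ hm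
          rw [Opens.coe_inf] at this
          exact this.1
        · intro O hO hyO
          have hm : ((⊤ : Opens X) ⊓ ⟨O, hO⟩) ∈
              FilterJoin {U : Opens X | x ∈ U} {U : Opens X | y ∈ U} :=
            ⟨⊤, trivial, ⟨O, hO⟩, hyO, rfl⟩
          have := Set.mem_iInter₂.mp hz _ hm
          rw [Opens.coe_inf] at this
          exact this.2
      obtain ⟨u, hu, v, hv, heq⟩ := hmem ⟨W, hW⟩ hKsub
      refine ⟨↑u, ↑v, u.2, hu, v.2, hv, ?_⟩
      intro z hz
      have hzW : z ∈ (↑(u ⊓ v) : Set X) := by rw [Opens.coe_inf]; exact hz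
      rw [← heq] at hzW
      exact hzW
    · -- Coherent
      intro Q₁ Q₂ hc1 hs1 hc2 hs2
      have hF := scottOpenFilter_nbhds hc1
      have hG := scottOpenFilter_nbhds hc2
      have hH := hLT _ _ hF hG
      obtain ⟨-, hcomp⟩ := hofmann_mislove hsob hH
      have h : (⋂ V ∈ FilterJoin {U : Opens X | Q₁ ⊆ ↑U} {U : Opens X | Q₂ ⊆ ↑U},
          (V : Set X)) = Q₁ ∩ Q₂ := by
        apply Subset.antisymm
        · intro z hz
          constructor
          · rw [hs1, Set.mem_sInter]
            rintro t ⟨hto, hQt⟩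
            have hm : ((⟨t, hto⟩ : Opens X) ⊓ ⊤) ∈
                FilterJoin {U : Opens X | Q₁ ⊆ ↑U} {U : Opens X | Q₂ ⊆ ↑U} :=
              ⟨⟨t, hto⟩, hQt, ⊤, by simp, rfl⟩
            have := Set.mem_iInter₂.mp hz _ hm
            rw [Opens.coe_inf] at this
            exact this.1
          · rw [hs2, Set.mem_sInter]
            rintro t ⟨hto, hQt⟩
            have hm : ((⊤ : Opens X) ⊓ ⟨t, hto⟩) ∈
                FilterJoin {U : Opens X | Q₁ ⊆ ↑U} {U : Opens X | Q₂ ⊆ ↑U} :=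
              ⟨⊤, by simp, ⟨t, hto⟩, hQt, rfl⟩
            have := Set.mem_iInter₂.mp hz _ hm
            rw [Opens.coe_inf] at this
            exact this.2
        · intro z hz
          apply Set.mem_iInter₂.2
          rintro V ⟨u, hu, v, hv, rfl⟩
          rw [Opens.coe_inf]
          exact ⟨hu hz.1, hv hz.2⟩
      rw [← h]
      exact hcomp
  · rintro ⟨hwh, hcoh⟩ F G hF hG
    obtain ⟨hFnb, hKF⟩ := hofmann_mislove hsob hF
    obtain ⟨hGnb, hKG⟩ := hofmann_mislove hsob hG
    set Q₁ : Set X := ⋂ V ∈ F, (V : Set X) with hQ1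
    set Q₂ : Set X := ⋂ V ∈ G, (V : Set X) with hQ2
    have hu1 : UpClosed Q₁ := by
      intro a ha b hab
      rw [Set.mem_iInter₂] at ha ⊢
      exact fun V hV => hab _ V.2 (ha V hV)
    have hu2 : UpClosed Q₂ := by
      intro a ha b hab
      rw [Set.mem_iInter₂] at ha ⊢
      exact fun V hV => hab _ V.2 (ha V hV)
    have hcQ : IsCompact (Q₁ ∩ Q₂) :=
      hcoh Q₁ Q₂ hKF (saturated_of_upClosed hu1) hKG (saturated_of_upClosed hu2)
    refine ⟨⟨?_, ?_, ?_⟩, ?_⟩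
    · obtain ⟨u, hu⟩ := hF.1.1
      obtain ⟨v, hv⟩ := hG.1.1
      exact ⟨u ⊓ v, u, hu, v, hv, rfl⟩
    · rintro _ ⟨u, hu, v, hv, rfl⟩ w' hle
      refine ⟨u ⊔ w', hF.1.2.1 u hu _ le_sup_left, v ⊔ w', hG.1.2.1 v hv _ le_sup_left, ?_⟩
      rw [← sup_inf_right, sup_eq_right.mpr hle]
    · rintro _ ⟨u, hu, v, hv, rfl⟩ _ ⟨u', hu', v', hv', rfl⟩
      obtain ⟨uu, huu, huu1, huu2⟩ := hF.1.2.2 u hu u' hu'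
      obtain ⟨vv, hvv, hvv1, hvv2⟩ := hG.1.2.2 v hv v' hv'
      refine ⟨uu ⊓ vv, ⟨uu, huu, vv, hvv, rfl⟩, ?_, ?_⟩
      · exact inf_le_inf huu1 hvv1
      · exact inf_le_inf huu2 hvv2
    · intro D hne hdir hmem
      obtain ⟨u, hu, v, hv, heq⟩ := hmem
      have hsub : Q₁ ∩ Q₂ ⊆ ↑(sSup D) := by
        rw [heq, Opens.coe_inf]
        refine Set.inter_subset_inter ?_ ?_
        · exact fun z hz => Set.mem_iInter₂.mp hz u hu
        · exact fun z hz => Set.mem_iInter₂.mp hz v hv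
      obtain ⟨d, hdD, hQd⟩ := exists_le_of_compact_subset_sSup hcQ hne hdir hsub
      obtain ⟨A, B, hAo, hQ1A, hBo, hQ2B, hABd⟩ := wh_sep hwh hKF hu1 hKG hu2 d.2 hQd
      have hAF : (⟨A, hAo⟩ : Opens X) ∈ F := hFnb ⟨A, hAo⟩ hQ1A
      have hBG : (⟨B, hBo⟩ : Opens X) ∈ G := hGnb ⟨B, hBo⟩ hQ2B
      refine ⟨d, hdD, ⟨A, hAo⟩ ⊔ d, hF.1.2.1 _ hAF _ le_sup_left,
        ⟨B, hBo⟩ ⊔ d, hG.1.2.1 _ hBG _ le_sup_left, ?_⟩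
      have hABle : ((⟨A, hAo⟩ : Opens X) ⊓ ⟨B, hBo⟩) ≤ d := by
        intro z hz
        apply hABd
        have : z ∈ (↑((⟨A, hAo⟩ : Opens X) ⊓ ⟨B, hBo⟩) : Set X) := hz
        rwa [Opens.coe_inf] at this
      rw [← sup_inf_right, sup_eq_right.mpr hABle]
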